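/- Fix n ∈ {1,…,N}, x_1,…,x_T ∈ ℝ^L, nonnegative coefficients a_{jt} ≥ 0, and vectors e_j ∈ ℝ^L for j ≠ n, and define J(e) = (1/2)∑_{t=1}^T ‖x_t x_tᵀ − a_{nt}·e eᵀ − ∑_{j≠n} a_{jt}·e_j e_jᵀ‖²_F. If there exists a coordinate k ∈ {1,…,L} such that ∑_{t=1}^T a_{nt}( ∑_{j≠n} a_{jt} e_{jk}² − x_{kt}² ) < 0, then J is not a convex function on ℝ^L. In particular, the kernel-NMF suboptimization problem over a single endmember with the quadratic polynomial kernel is in general nonconvex. -/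

import Mathlib

open Finset

attribute [local instance] Matrix.frobeniusNormedAddCommGroup

private lemma fro_sq {L : ℕ} (A : Matrix (Fin L) (Fin L) ℝ) :
    ‖A‖ ^ 2 = ∑ i, ∑ j, (A i j) ^ 2 := by
  have h : (0 : ℝ) ≤ ∑ i, ∑ j, ‖A i j‖ ^ (2 : ℝ) := by
    apply Finset.sum_nonneg; intro i _
    apply Finset.sum_nonneg; intro j _
    positivity
  rw [Matrix.frobenius_norm_def]
  rw [← Real.rpow_natCast ((∑ i, ∑ j, ‖A i j‖ ^ (2 : ℝ)) ^ (1 / 2 : ℝ)) 2,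
    ← Real.rpow_mul h]
  norm_num

private lemma entry_sum {L : ℕ} (k : Fin L) (M : Matrix (Fin L) (Fin L) ℝ) (c s : ℝ) :
    ∑ i, ∑ j, (M i j - c * ((Pi.single k s : Fin L → ℝ) i
        * (Pi.single k s : Fin L → ℝ) j)) ^ 2
      = (∑ i, ∑ j, (M i j) ^ 2) - 2 * c * s ^ 2 * M k k + c ^ 2 * s ^ 4 := by
  have key : ∀ i j, (M i j - c * ((Pi.single k s : Fin L → ℝ) i
        * (Pi.single k s : Fin L → ℝ) j)) ^ 2
      = (M i j) ^ 2 + (if i = k then (if j = k then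
          c ^ 2 * s ^ 4 - 2 * c * s ^ 2 * M k k else 0) else 0) := by
    intro i j
    by_cases hi : i = k
    · by_cases hj : j = k
      · rw [if_pos hi, if_pos hj, hi, hj, Pi.single_eq_same]; ring
      · rw [if_pos hi, if_neg hj, Pi.single_eq_of_ne hj]; ring
    · rw [if_neg hi, Pi.single_eq_of_ne hi]; ring
  simp_rw [key]
  rw [show (∑ i, ∑ j, ((M i j) ^ 2 + (if i = k then (if j = k then
      c ^ 2 * s ^ 4 - 2 * c * s ^ 2 * M k k else 0) else 0)))
      = (∑ i, ∑ j, (M i j) ^ 2) + ∑ i, ∑ j, (if i = k then (if j = k then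
      c ^ 2 * s ^ 4 - 2 * c * s ^ 2 * M k k else 0) else 0) from by
    rw [← Finset.sum_add_distrib]
    exact Finset.sum_congr rfl fun i _ => by rw [← Finset.sum_add_distrib]]
  have h2 : ∑ i, ∑ j, (if i = k then (if j = k then
      c ^ 2 * s ^ 4 - 2 * c * s ^ 2 * M k k else 0) else 0)
      = c ^ 2 * s ^ 4 - 2 * c * s ^ 2 * M k k := by
    have h3 : ∀ i : Fin L, ∑ j, (if i = k then (if j = k then
        c ^ 2 * s ^ 4 - 2 * c * s ^ 2 * M k k else 0) else 0)
        = (if i = k then c ^ 2 * s ^ 4 - 2 * c * s ^ 2 * M k k else 0) := by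
      intro i
      by_cases hi : i = k
      · simp [hi, Finset.sum_ite_eq' Finset.univ k]
      · simp [hi]
    simp_rw [h3]
    simp [Finset.sum_ite_eq' Finset.univ k]
  rw [h2]
  ring

/-- For the quadratic polynomial kernel (feature map `Φ(u) = u uᵀ`), if some
coordinate `k` satisfies `∑_t a_{nt}(∑_{j≠n} a_{jt} e_{jk}² − x_{kt}²) < 0`,
then the kernel-NMF cost, as a function of the single endmember `e = e_n`,
is not convex on `ℝ^L`. -/
theorem kernelNMF_quadratic_endmember_subproblem_nonconvex
    {L N T : ℕ} (n : Fin N)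
    (x : Fin T → Fin L → ℝ)
    (a : Fin N → Fin T → ℝ) (ha : ∀ j t, 0 ≤ a j t)
    (e : Fin N → Fin L → ℝ)
    (k : Fin L)
    (hneg : ∑ t, a n t * (∑ j ∈ univ.erase n, a j t * (e j k)^2 - (x t k)^2) < 0) :
    ¬ ConvexOn ℝ Set.univ
      (fun v : Fin L → ℝ =>
        (1/2 : ℝ) * ∑ t, ‖Matrix.vecMulVec (x t) (x t)
            - a n t • Matrix.vecMulVec v v
            - ∑ j ∈ univ.erase n, a j t • Matrix.vecMulVec (e j) (e j)‖^2) := by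
  intro hconv
  set f : (Fin L → ℝ) → ℝ := fun v =>
    (1/2 : ℝ) * ∑ t, ‖Matrix.vecMulVec (x t) (x t)
        - a n t • Matrix.vecMulVec v v
        - ∑ j ∈ univ.erase n, a j t • Matrix.vecMulVec (e j) (e j)‖^2 with hf
  set M : Fin T → Matrix (Fin L) (Fin L) ℝ := fun t =>
    Matrix.vecMulVec (x t) (x t)
      - ∑ j ∈ univ.erase n, a j t • Matrix.vecMulVec (e j) (e j) with hM
  set C : ℝ := (1/2 : ℝ) * ∑ t, ∑ i, ∑ j, (M t i j) ^ 2 with hC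
  set Q : ℝ := (1/2 : ℝ) * ∑ t, (a n t) ^ 2 with hQdef
  set B : ℝ := ∑ t, a n t * (M t k k) with hB
  -- evaluation along the k-th coordinate line
  have heval : ∀ s : ℝ, f (Pi.single k s : Fin L → ℝ) = C + Q * s ^ 4 - B * s ^ 2 := by
    intro s
    have hterm : ∀ t, ‖Matrix.vecMulVec (x t) (x t)
        - a n t • Matrix.vecMulVec (Pi.single k s : Fin L → ℝ) (Pi.single k s : Fin L → ℝ)
        - ∑ j ∈ univ.erase n, a j t • Matrix.vecMulVec (e j) (e j)‖ ^ 2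
        = (∑ i, ∑ j, (M t i j) ^ 2)
            - 2 * (a n t) * s ^ 2 * M t k k + (a n t) ^ 2 * s ^ 4 := by
      intro t
      have hre : Matrix.vecMulVec (x t) (x t)
          - a n t • Matrix.vecMulVec (Pi.single k s : Fin L → ℝ) (Pi.single k s : Fin L → ℝ)
          - ∑ j ∈ univ.erase n, a j t • Matrix.vecMulVec (e j) (e j)
          = M t - a n t • Matrix.vecMulVec (Pi.single k s : Fin L → ℝ)
              (Pi.single k s : Fin L → ℝ) := by
        rw [hM]; exact sub_right_comm _ _ _
      rw [hre, fro_sq]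
      rw [← entry_sum k (M t) (a n t) s]
      apply Finset.sum_congr rfl; intro i _
      apply Finset.sum_congr rfl; intro j _
      simp [Matrix.vecMulVec_apply]
    have hBsum : ∑ t, 2 * (a n t) * s ^ 2 * M t k k = 2 * s ^ 2 * B := by
      rw [hB, Finset.mul_sum]
      exact Finset.sum_congr rfl fun t _ => by ring
    have hQsum : ∑ t, (a n t) ^ 2 * s ^ 4 = s ^ 4 * ∑ t, (a n t) ^ 2 := by
      rw [Finset.mul_sum]
      exact Finset.sum_congr rfl fun t _ => by ring
    simp only [hf]
    simp only [hterm]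
    rw [Finset.sum_add_distrib, Finset.sum_sub_distrib, hBsum, hQsum, hC, hQdef]
    ring
  -- B > 0
  have hBpos : 0 < B := by
    have hMkk : ∀ t, M t k k = (x t k) ^ 2 - ∑ j ∈ univ.erase n, a j t * (e j k) ^ 2 := by
      intro t
      simp only [hM, Matrix.sub_apply, Matrix.vecMulVec_apply]
      congr 1
      · ring
      · rw [Matrix.sum_apply]
        apply Finset.sum_congr rfl; intro j _
        rw [Matrix.smul_apply, Matrix.vecMulVec_apply, smul_eq_mul]
        ring
    have : ∑ t, a n t * (∑ j ∈ univ.erase n, a j t * (e j k)^2 - (x t k)^2) = -B := by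
      rw [hB, ← Finset.sum_neg_distrib]
      apply Finset.sum_congr rfl; intro t _
      rw [hMkk t]; ring
    rw [this] at hneg; linarith
  have hQnn : 0 ≤ Q := by
    rw [hQdef]
    have : 0 ≤ ∑ t, (a n t) ^ 2 := by positivity
    linarith
  -- pick a small step
  set s : ℝ := Real.sqrt (B / (2 * (Q + 1))) with hs
  have hs2 : s ^ 2 = B / (2 * (Q + 1)) := Real.sq_sqrt (by positivity)
  have hspos : 0 < s ^ 2 := by rw [hs2]; positivity
  -- convexity inequality at 0 and single k s with weights 1/2
  have hineq := hconv.2 (Set.mem_univ (0 : Fin L → ℝ))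
    (Set.mem_univ (Pi.single k s : Fin L → ℝ))
    (by norm_num : (0:ℝ) ≤ 1/2) (by norm_num : (0:ℝ) ≤ 1/2) (by norm_num)
  have hmid : (1/2 : ℝ) • (0 : Fin L → ℝ) + (1/2 : ℝ) • (Pi.single k s : Fin L → ℝ)
      = (Pi.single k (s / 2) : Fin L → ℝ) := by
    funext i
    rcases eq_or_ne i k with rfl | hi
    · simp [Pi.single_eq_same]
      ring
    · simp [Pi.single_eq_of_ne hi]
  rw [hmid] at hineq
  have h0 : (0 : Fin L → ℝ) = (Pi.single k 0 : Fin L → ℝ) := by simp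
  rw [h0, heval, heval, heval, smul_eq_mul, smul_eq_mul] at hineq
  have hkey : s ^ 2 * (2 * (Q + 1)) = B := by
    rw [hs2]
    field_simp
  nlinarith [hineq, hspos, hQnn, hBpos, hkey, mul_pos hspos hspos, sq_nonneg s]
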